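/- Let f_c(r) = -r^m + 2cα·r^k - 1 with m > k ≥ 1 natural numbers and α > 0. There exists c₀ > 0 such that for all 0 < c < c₀ the function f_c has no positive real zeros, and for all c > c₀ the function f_c has exactly two positive real zeros. -/

import Mathlib

open Set

lemma gderiv (j q : ℕ) (r : ℝ) (hr : r ≠ 0) :
    HasDerivAt (fun r : ℝ => r ^ (q+1) + (r ^ (j+1))⁻¹)
      (((q+1:ℝ) * r ^ (q+j+2) - (j+1)) / r ^ (j+2)) r := by
  have h1 := hasDerivAt_pow (q+1) r
  have h2 := (hasDerivAt_pow (j+1) r).inv (pow_ne_zero _ hr)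
  have h := h1.add h2
  convert h using 1
  · rfl
  · rfl
  · rfl
  have : (q+1) - 1 = q := by omega
  rw [this]
  have : (j+1) - 1 = j := by omega
  rw [this]
  field_simp
  push_cast
  ring

lemma gcont (j q : ℕ) (s : Set ℝ) (hs : (0:ℝ) ∉ s) :
    ContinuousOn (fun r : ℝ => r ^ (q+1) + (r ^ (j+1))⁻¹) s := by
  apply ContinuousOn.add (continuousOn_pow _)
  exact ContinuousOn.inv₀ (continuousOn_pow _) (fun x hx => pow_ne_zero _ (fun h => hs (h ▸ hx)))

lemma master (j q : ℕ) : ∃ T : ℝ, 0 < T ∧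
    (∀ t : ℝ, t < T → {r : ℝ | 0 < r ∧ r ^ (q+1) + (r ^ (j+1))⁻¹ = t} = ∅) ∧
    (∀ t : ℝ, T < t → {r : ℝ | 0 < r ∧ r ^ (q+1) + (r ^ (j+1))⁻¹ = t}.ncard = 2) := by
  set g : ℝ → ℝ := fun r => r ^ (q+1) + (r ^ (j+1))⁻¹ with hg
  set m : ℕ := q + j + 2 with hm
  set A : ℝ := ((j:ℝ)+1) / ((q:ℝ)+1) with hA
  have hApos : 0 < A := by positivity
  set ρ : ℝ := A ^ ((m:ℝ)⁻¹) with hρ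
  have hρpos : 0 < ρ := Real.rpow_pos_of_pos hApos _
  have hρm : ρ ^ m = A := by
    rw [hρ, ← Real.rpow_natCast (A ^ ((m:ℝ)⁻¹)) m, ← Real.rpow_mul hApos.le]
    rw [inv_mul_cancel₀ (by positivity : (m:ℝ) ≠ 0), Real.rpow_one]
  have hderivneg : ∀ r ∈ Ioo 0 ρ, deriv g r < 0 := by
    intro r hr
    rw [(gderiv j q r (ne_of_gt hr.1)).deriv]
    apply div_neg_of_neg_of_pos
    · have h1 : r ^ m < ρ ^ m := pow_lt_pow_left₀ hr.2 hr.1.le (by omega)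
      rw [hρm] at h1
      have : ((q:ℝ)+1) * r ^ m < ((q:ℝ)+1) * A :=
        mul_lt_mul_of_pos_left h1 (by positivity)
      rw [hA, mul_div_cancel₀ _ (by positivity : ((q:ℝ)+1) ≠ 0)] at this
      push_cast
      linarith
    · exact pow_pos hr.1 _
  have hderivpos : ∀ r ∈ Ioi ρ, 0 < deriv g r := by
    intro r hr
    have hrpos : 0 < r := hρpos.trans hr
    rw [(gderiv j q r (ne_of_gt hrpos)).deriv]
    apply div_pos
    · have h1 : ρ ^ m < r ^ m := pow_lt_pow_left₀ hr hρpos.le (by omega)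
      rw [hρm] at h1
      have : ((q:ℝ)+1) * A < ((q:ℝ)+1) * r ^ m :=
        mul_lt_mul_of_pos_left h1 (by positivity)
      rw [hA, mul_div_cancel₀ _ (by positivity : ((q:ℝ)+1) ≠ 0)] at this
      push_cast
      linarith
    · exact pow_pos hrpos _
  have hanti : StrictAntiOn g (Ioc 0 ρ) := by
    apply strictAntiOn_of_deriv_neg (convex_Ioc 0 ρ) (gcont j q _ (by simp))
    intro r hr
    rw [interior_Ioc] at hr
    exact hderivneg r hr
  have hmono : StrictMonoOn g (Ici ρ) := by
    apply strictMonoOn_of_deriv_pos (convex_Ici ρ)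
      (gcont j q _ (by simp [not_le, hρpos]))
    intro r hr
    rw [interior_Ici] at hr
    exact hderivpos r hr
  have hgρpos : 0 < g ρ := by
    show (0:ℝ) < ρ ^ (q+1) + (ρ ^ (j+1))⁻¹
    positivity
  have hmin : ∀ r : ℝ, 0 < r → g ρ ≤ g r := by
    intro r hr
    rcases lt_trichotomy r ρ with h | rfl | h
    · exact (hanti ⟨hr, h.le⟩ ⟨hρpos, le_refl _⟩ h).le
    · exact le_refl _
    · exact (hmono (Set.mem_Ici.mpr (le_refl ρ)) h.le h).le
  refine ⟨g ρ, hgρpos, ?_, ?_⟩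
  · intro t ht
    ext r
    simp only [mem_setOf_eq, mem_empty_iff_false, iff_false, not_and]
    intro hr hgr
    have h2 : g r = t := hgr
    have := hmin r hr
    linarith
  · intro t ht
    have htpos : 0 < t := lt_trans hgρpos ht
    set a : ℝ := min (ρ/2) (min 1 t⁻¹) with ha
    have hapos : 0 < a := lt_min (by positivity) (lt_min one_pos (by positivity))
    have haρ : a < ρ := lt_of_le_of_lt (min_le_left _ _) (by linarith)
    have hga : t < g a := by
      have h1 : a ≤ 1 := le_trans (min_le_right _ _) (min_le_left _ _)
      have h2 : a ≤ t⁻¹ := le_trans (min_le_right _ _) (min_le_right _ _)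
      have h3 : a ^ (j+1) ≤ a := pow_le_of_le_one hapos.le h1 (by omega)
      have h4 : a ^ (j+1) ≤ t⁻¹ := h3.trans h2
      have h5 : t ≤ (a ^ (j+1))⁻¹ := by
        rw [← inv_inv t]
        exact inv_anti₀ (by positivity) h4
      have h6 : 0 < a ^ (q+1) := by positivity
      show t < a ^ (q+1) + (a ^ (j+1))⁻¹
      linarith
    set b : ℝ := max (ρ+1) (max 1 t) with hb
    have hbρ : ρ < b := lt_of_lt_of_le (by linarith) (le_max_left _ _)
    have hgb : t < g b := by
      have h1 : 1 ≤ b := le_trans (le_max_left _ _) (le_max_right _ _)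
      have h2 : t ≤ b := le_trans (le_max_right _ _) (le_max_right _ _)
      have h3 : b ≤ b ^ (q+1) := le_self_pow₀ h1 (by omega)
      have h4 : 0 < (b ^ (j+1))⁻¹ := by positivity
      show t < b ^ (q+1) + (b ^ (j+1))⁻¹
      linarith
    obtain ⟨r₁, hr₁mem, hr₁⟩ : ∃ r ∈ Icc a ρ, g r = t :=
      intermediate_value_Icc' haρ.le
        (gcont j q (Icc a ρ) (fun h => absurd h.1 (not_le.mpr hapos))) ⟨ht.le, hga.le⟩
    obtain ⟨r₂, hr₂mem, hr₂⟩ : ∃ r ∈ Icc ρ b, g r = t :=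
      intermediate_value_Icc hbρ.le
        (gcont j q (Icc ρ b) (fun h => absurd h.1 (not_le.mpr hρpos))) ⟨ht.le, hgb.le⟩
    have hr₁pos : 0 < r₁ := lt_of_lt_of_le hapos hr₁mem.1
    have hgρt : g ρ ≠ t := ne_of_lt ht
    have hr₁lt : r₁ < ρ := lt_of_le_of_ne hr₁mem.2 (fun h => hgρt (h ▸ hr₁))
    have hr₂gt : ρ < r₂ := lt_of_le_of_ne hr₂mem.1 (fun h => hgρt (by rw [h]; exact hr₂))
    have hne : r₁ ≠ r₂ := ne_of_lt (hr₁lt.trans hr₂gt)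
    have hset : {r : ℝ | 0 < r ∧ r ^ (q+1) + (r ^ (j+1))⁻¹ = t} = {r₁, r₂} := by
      ext r
      simp only [mem_setOf_eq, mem_insert_iff, mem_singleton_iff]
      constructor
      · rintro ⟨hr, hgr⟩
        have hgr' : g r = t := hgr
        rcases le_or_gt r ρ with h | h
        · left
          exact hanti.injOn ⟨hr, h⟩ ⟨hr₁pos, hr₁lt.le⟩ (by rw [hgr', hr₁])
        · right
          exact hmono.injOn h.le hr₂gt.le (by rw [hgr', hr₂])
      · rintro (rfl | rfl)
        · exact ⟨hr₁pos, hr₁⟩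
        · exact ⟨hρpos.trans hr₂gt, hr₂⟩
    rw [hset, Set.ncard_pair hne]

theorem zero_count_transition_pos_k (m k : ℕ) (hk : 1 ≤ k) (hmk : k < m) (α : ℝ) (hα : 0 < α) :
    ∃ c₀ : ℝ, 0 < c₀ ∧
      (∀ c : ℝ, 0 < c → c < c₀ →
        {r : ℝ | 0 < r ∧ -r ^ m + 2 * c * α * r ^ k - 1 = 0} = ∅) ∧
      (∀ c : ℝ, c₀ < c →
        {r : ℝ | 0 < r ∧ -r ^ m + 2 * c * α * r ^ k - 1 = 0}.ncard = 2) := by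
  obtain ⟨j, rfl⟩ : ∃ j, k = j + 1 := ⟨k - 1, by omega⟩
  obtain ⟨q, rfl⟩ : ∃ q, m = (j + 1) + (q + 1) := ⟨m - j - 2, by omega⟩
  obtain ⟨T, hT, h1, h2⟩ := master j q
  have hsets : ∀ c : ℝ, {r : ℝ | 0 < r ∧ -r ^ ((j+1)+(q+1)) + 2 * c * α * r ^ (j+1) - 1 = 0}
      = {r : ℝ | 0 < r ∧ r ^ (q+1) + (r ^ (j+1))⁻¹ = 2 * c * α} := by
    intro c
    ext r
    simp only [Set.mem_setOf_eq, and_congr_right_iff]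
    intro hr
    have hne : r ^ (j+1) ≠ 0 := pow_ne_zero _ hr.ne'
    have key : r ^ (j + 1 + (q + 1)) = r ^ (j+1) * r ^ (q+1) := by rw [pow_add]
    constructor
    · intro h
      field_simp
      nlinarith [h]
    · intro h
      field_simp at h
      nlinarith [h]
  refine ⟨T / (2 * α), by positivity, ?_, ?_⟩
  · intro c hc hcc
    rw [hsets c]
    apply h1
    rw [lt_div_iff₀ (by positivity)] at hcc
    linarith
  · intro c hcc
    rw [hsets c]
    apply h2
    rw [div_lt_iff₀ (by positivity)] at hcc
    linarith
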